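/- arXiv:2103.02516 — 6 statements merged into one kernel-verified Lean document; each statement's English description precedes it below -/
import Mathlib

section
/- Let G be a finite abelian group and c ∈ G a nontrivial element. Then the intersection of all subgroups G' ⊆ G such that G/G' is cyclic and c ∉ G' is the trivial subgroup. -/
lemma aux_exists_char {G : Type*} [CommGroup G] [Fintype G] {c g : G}
    (hc : c ≠ 1) (hg : g ≠ 1) : ∃ χ : G →* ℂˣ, χ c ≠ 1 ∧ χ g ≠ 1 := by
  obtain ⟨φ, hφ⟩ := CommGroup.exists_apply_ne_one_of_hasEnoughRootsOfUnity G ℂ hc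
  obtain ⟨ψ, hψ⟩ := CommGroup.exists_apply_ne_one_of_hasEnoughRootsOfUnity G ℂ hg
  by_cases h1 : φ g ≠ 1
  · exact ⟨φ, hφ, h1⟩
  by_cases h2 : ψ c ≠ 1
  · exact ⟨ψ, h2, hψ⟩
  push_neg at h1 h2
  exact ⟨φ * ψ, by simp [h2, hφ], by simp [h1, hψ]⟩

/-- Let `G` be a finite abelian group and `c ∈ G` a nontrivial element. Then the
intersection of all subgroups `G' ⊆ G` such that `G/G'` is cyclic and `c ∉ G'`
is the trivial subgroup. -/
theorem stmt_0 {G : Type*} [CommGroup G] [Fintype G] (c : G) (hc : c ≠ 1) :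
    sInf {H : Subgroup G | IsCyclic (G ⧸ H) ∧ c ∉ H} = ⊥ := by
  rw [eq_bot_iff]
  intro g hg
  simp only [Subgroup.mem_sInf, Set.mem_setOf_eq] at hg
  rw [Subgroup.mem_bot]
  by_contra hg1
  obtain ⟨χ, hχc, hχg⟩ := aux_exists_char hc hg1
  have hcyc : IsCyclic (G ⧸ χ.ker) := by
    have := subgroup_units_cyclic χ.range
    exact isCyclic_of_surjective (QuotientGroup.quotientKerEquivRange χ).symm
      (QuotientGroup.quotientKerEquivRange χ).symm.surjective
  have := hg χ.ker ⟨hcyc, fun h => hχc (MonoidHom.mem_ker.mp h)⟩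
  exact hχg (MonoidHom.mem_ker.mp this)
end

section
/- Let R be a commutative ring, Θ_H ∈ R/I for an ideal I of R, and Θ_L ∈ R a lift of an element of I. Define R_L = R[X]/(Θ̃_H·X − Θ_L, X·I, X², I²) where Θ̃_H is a lift of Θ_H. If for all r ∈ R with r·Θ_H = 0 in R/I one has r·Θ_L ∈ I², then the kernel of the structure map R → R_L is exactly I². -/
open Polynomial

/-- Let `R` be a commutative ring, `I` an ideal, `ΘL ∈ I`, and `ΘH ∈ R` (a lift of
`Θ_H ∈ R/I`).  Let `R_L = R[X]/(ΘH·X − ΘL, X·I, X², I²)`.  If for all `r ∈ R` with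
`r·ΘH ≡ 0 mod I` one has `r·ΘL ∈ I²`, then the kernel of the structure map
`R → R_L` is exactly `I²`. -/
theorem stmt_1 {R : Type*} [CommRing R] (I : Ideal R) (ΘL ΘH : R) (hΘL : ΘL ∈ I)
    (H : ∀ r : R, r * ΘH ∈ I → r * ΘL ∈ I ^ 2) :
    RingHom.ker ((Ideal.Quotient.mk (Ideal.span
        ({C ΘH * X - C ΘL, X ^ 2} ∪ (fun t : R => X * C t) '' (I : Set R)
          ∪ C '' ((I ^ 2 : Ideal R) : Set R)))).comp (C : R →+* R[X])) = I ^ 2 := by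
  set S : Set R[X] := ({C ΘH * X - C ΘL, X ^ 2} ∪ (fun t : R => X * C t) '' (I : Set R)
          ∪ C '' ((I ^ 2 : Ideal R) : Set R)) with hS
  have key : ∀ p ∈ Ideal.span S,
      ∃ a : R, p.coeff 0 + a * ΘL ∈ I ^ 2 ∧ p.coeff 1 - a * ΘH ∈ I := by
    intro p hp
    refine Submodule.span_induction ?_ ?_ ?_ ?_ hp
    · intro x hx
      rcases hx with (hx | hx) | hx
      · rcases hx with hx | hx
        · refine ⟨1, ?_, ?_⟩ <;> simp [hx]
        · refine ⟨0, ?_, ?_⟩ <;>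
            simp [Set.mem_singleton_iff.mp hx, coeff_X_pow]
      · obtain ⟨t, ht, rfl⟩ := hx
        exact ⟨0, by simp, by simpa using ht⟩
      · obtain ⟨s, hs, rfl⟩ := hx
        exact ⟨0, by simpa using hs, by simp⟩
    · exact ⟨0, by simp, by simp⟩
    · rintro x y - - ⟨a, ha0, ha1⟩ ⟨b, hb0, hb1⟩
      refine ⟨a + b, ?_, ?_⟩
      · have := Ideal.add_mem _ ha0 hb0
        convert this using 1
        simp [coeff_add]; ring
      · have := Ideal.add_mem _ ha1 hb1
        convert this using 1
        simp [coeff_add]; ring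
    · rintro q x - ⟨a, ha0, ha1⟩
      have hx0I : x.coeff 0 ∈ I := by
        have h1 : x.coeff 0 + a * ΘL ∈ I := (Ideal.pow_le_self two_ne_zero) ha0
        have h2 : a * ΘL ∈ I := Ideal.mul_mem_left _ _ hΘL
        simpa using Ideal.sub_mem _ h1 h2
      refine ⟨q.coeff 0 * a, ?_, ?_⟩
      · have : q.coeff 0 * (x.coeff 0 + a * ΘL) ∈ I ^ 2 := Ideal.mul_mem_left _ _ ha0
        convert this using 1
        simp [smul_eq_mul, mul_coeff_zero]; ring
      · have h1 : q.coeff 0 * (x.coeff 1 - a * ΘH) ∈ I := Ideal.mul_mem_left _ _ ha1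
        have h2 : q.coeff 1 * x.coeff 0 ∈ I := Ideal.mul_mem_left _ _ hx0I
        have := Ideal.add_mem _ h1 h2
        convert this using 1
        have hc : (q * x).coeff 1 = q.coeff 0 * x.coeff 1 + q.coeff 1 * x.coeff 0 := by
          rw [coeff_mul, Finset.Nat.sum_antidiagonal_eq_sum_range_succ_mk]
          simp [Finset.sum_range_succ]
        simp only [smul_eq_mul, hc]; ring
  ext r
  simp only [RingHom.mem_ker, RingHom.comp_apply, Ideal.Quotient.eq_zero_iff_mem]
  constructor
  · intro hr
    obtain ⟨a, ha0, ha1⟩ := key _ hr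
    have haH : a * ΘH ∈ I := by simpa using neg_mem ha1
    have haL : a * ΘL ∈ I ^ 2 := H a haH
    have : r + a * ΘL ∈ I ^ 2 := by simpa using ha0
    simpa using Ideal.sub_mem _ this haL
  · intro hr
    exact Ideal.subset_span (Or.inr ⟨r, hr, rfl⟩)
end

section
/- Let u be an element of a field extension H of F such that the multiset of values {ord_P(σ(u)) : σ ∈ Gal(H/F)} pairs with a faithful character χ of the finite cyclic group G = Gal(H/F) to give a nonzero value L := Σ_σ ord_P(σ(u))χ(σ) ≠ 0. If τ ∈ G fixes u, then τ = 1; consequently H = F(u). -/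
/-- Let `H/F` be a finite Galois extension with group `G = Gal(H/F)`, `χ : G → ℂ*` a
faithful character, and `ord : H → ℤ` (e.g. `ord_P ∘ (· u)` valuations).  Suppose
`L := Σ_{σ ∈ G} ord(σ(u))·χ(σ) ≠ 0`.  Then any `τ ∈ G` fixing `u` is trivial, and
consequently `H = F(u)`. -/
theorem stmt_7 {F H : Type*} [Field F] [Field H] [Algebra F H]
    [FiniteDimensional F H] [IsGalois F H]
    (χ : (H ≃ₐ[F] H) →* ℂˣ) (hχ : Function.Injective χ)
    (ord : H → ℤ) (u : H)
    (hL : ∑ σ : H ≃ₐ[F] H, (ord (σ u) : ℂ) * ((χ σ : ℂˣ) : ℂ) ≠ 0) :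
    (∀ τ : H ≃ₐ[F] H, τ u = u → τ = 1) ∧
      IntermediateField.adjoin F {u} = ⊤ := by
  have key : ∀ τ : H ≃ₐ[F] H, τ u = u → τ = 1 := by
    intro τ hτ
    have hτ' : τ⁻¹ u = u := by
      conv_lhs => rw [← hτ]
      exact τ.symm_apply_apply u
    have h1 : ∑ σ : H ≃ₐ[F] H, (ord (σ u) : ℂ) * ((χ σ : ℂˣ) : ℂ)
        = (∑ σ : H ≃ₐ[F] H, (ord (σ u) : ℂ) * ((χ σ : ℂˣ) : ℂ)) * ((χ τ : ℂˣ) : ℂ) := by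
      rw [Finset.sum_mul]
      refine Fintype.sum_equiv (Equiv.mulRight τ⁻¹) _ _ (fun σ => ?_)
      have : (σ * τ⁻¹) u = σ u := by
        rw [AlgEquiv.mul_apply, hτ']
      rw [Equiv.coe_mulRight, this, map_mul, map_inv, Units.val_mul, mul_assoc,
        mul_assoc, Units.val_inv_eq_inv_val, inv_mul_cancel₀ (Units.ne_zero _), mul_one]
    have hχτ : ((χ τ : ℂˣ) : ℂ) = 1 :=
      (mul_left_cancel₀ hL (by rw [mul_one]; exact h1)).symm
    have hone : χ τ = 1 := Units.ext (by simpa using hχτ)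
    exact hχ (by simpa using hone)
  refine ⟨key, ?_⟩
  have hfix : (IntermediateField.adjoin F {u}).fixingSubgroup = ⊥ := by
    rw [eq_bot_iff]
    intro τ hτ
    have hu : u ∈ IntermediateField.adjoin F {u} :=
      IntermediateField.mem_adjoin_simple_self F u
    exact key τ (hτ ⟨u, hu⟩)
  have hf := IsGalois.fixedField_fixingSubgroup (IntermediateField.adjoin F {u})
  rw [hfix] at hf
  rw [← hf, eq_top_iff]
  intro x _
  rintro ⟨g, hg⟩
  rw [Subgroup.mem_bot] at hg
  subst hg
  rfl
end

section
/- Let G be a finite group, M a G-module on which 2 acts invertibly, and suppose the conjugation action of a fixed element c ∈ G̃ (lifting complex conjugation) is inversion on M. Given a group extension 1 → M → G̃ → G → 1 and a set-theoretic lift σ ↦ σ̃, the function λ(σ̃) = (σ̃ c̃ σ̃⁻¹ c̃⁻¹)^{1/2} defines a 1-cocycle on G̃ with values in M. -/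
/-- Let `G̃` be a group, `M ⊆ G̃` a normal abelian subgroup on which squaring is
injective ("2 acts invertibly"), and `c ∈ G̃` an element whose conjugation action
on `M` is inversion.  Assume all commutators `σ c σ⁻¹ c⁻¹` lie in `M` (as for a
group extension `1 → M → G̃ → G → 1` with `G̃` acting through `G`).  Then the
function `λ(σ) = (σ c σ⁻¹ c⁻¹)^{1/2}` is a 1-cocycle:
`λ(στ) = λ(σ) · (σ·λ(τ)·σ⁻¹)`. -/
theorem stmt_11 {Gt : Type*} [Group Gt] (M : Subgroup Gt) [M.Normal]
    (hcomm : ∀ a b : Gt, a ∈ M → b ∈ M → a * b = b * a)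
    (hsq : ∀ a b : Gt, a ∈ M → b ∈ M → a ^ 2 = b ^ 2 → a = b)
    (c : Gt) (hc : ∀ m ∈ M, c * m * c⁻¹ = m⁻¹)
    (hk : ∀ σ : Gt, σ * c * σ⁻¹ * c⁻¹ ∈ M)
    (l : Gt → Gt) (hlM : ∀ σ : Gt, l σ ∈ M)
    (hl : ∀ σ : Gt, (l σ) ^ 2 = σ * c * σ⁻¹ * c⁻¹) :
    ∀ σ τ : Gt, l (σ * τ) = l σ * (σ * l τ * σ⁻¹) := by
  intro σ τ
  have hB : σ * l τ * σ⁻¹ ∈ M := Subgroup.Normal.conj_mem ‹M.Normal› _ (hlM τ) σ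
  apply hsq _ _ (hlM _) (M.mul_mem (hlM σ) hB)
  have hcom : Commute (l σ) (σ * l τ * σ⁻¹) := hcomm _ _ (hlM σ) hB
  rw [hcom.mul_pow, hl, hl]
  have h2 : (σ * l τ * σ⁻¹) ^ 2 = σ * (l τ) ^ 2 * σ⁻¹ := conj_pow
  rw [h2, hl]
  have ha : σ⁻¹ * c * σ * c⁻¹ ∈ M := by
    have := hk σ⁻¹; simpa using this
  have e : (τ * c * τ⁻¹ * c⁻¹) * (σ⁻¹ * c * σ * c⁻¹)⁻¹
      = (σ⁻¹ * c * σ * c⁻¹)⁻¹ * (τ * c * τ⁻¹ * c⁻¹) :=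
    hcomm _ _ (hk τ) (M.inv_mem ha)
  have key : σ * τ * c * (σ * τ)⁻¹ * c⁻¹
      = σ * ((τ * c * τ⁻¹ * c⁻¹) * (σ⁻¹ * c * σ * c⁻¹)⁻¹) * σ⁻¹ := by group
  rw [key, e]
  group
end

section
/- Let R be a commutative ring, Θ_H, Θ'_H, Θ_L elements with Θ_L in an ideal I, Θ'_H ∈ R/I a non-zerodivisor dividing p^h, and define R_{X,m} = R[X]/(Θ_L − Θ̃'_H X, X², IX, I², p^m X). Then for m sufficiently large (depending on h and on the exponent annihilating I/I²), the kernel of R → R_{X,m} equals I². -/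
open Polynomial

/-- Let `R` be a commutative ring, `I` an ideal with `p^c·I ⊆ I²`, `ΘL ∈ I`, and
`ΘH'` a lift of a non-zerodivisor of `R/I` dividing `p^h` there.  Let
`R_{X,m} = R[X]/(ΘL − ΘH'·X, X², I·X, I², p^m·X)`.  Then for `m ≥ h + c`
the kernel of the structure map `R → R_{X,m}` equals `I²`. -/
theorem stmt_14 {R : Type*} [CommRing R] (p : ℕ) (hp : p.Prime)
    (I : Ideal R) (c h : ℕ)
    (hc : ∀ x ∈ I, (p : R) ^ c * x ∈ I ^ 2)
    (ΘL ΘH' : R) (hΘL : ΘL ∈ I)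
    (hnzd : Ideal.Quotient.mk I ΘH' ∈ nonZeroDivisors (R ⧸ I))
    (hdvd : Ideal.Quotient.mk I ΘH' ∣ (p : R ⧸ I) ^ h) :
    ∀ m : ℕ, h + c ≤ m →
      RingHom.ker ((Ideal.Quotient.mk (Ideal.span
          ({C ΘL - C ΘH' * X, X ^ 2, (p : R[X]) ^ m * X}
            ∪ (fun t : R => X * C t) '' (I : Set R)
            ∪ C '' ((I ^ 2 : Ideal R) : Set R)))).comp (C : R →+* R[X])) =
        I ^ 2 := by
  intro m hm
  set S : Set R[X] := ({C ΘL - C ΘH' * X, X ^ 2, (p : R[X]) ^ m * X}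
            ∪ (fun t : R => X * C t) '' (I : Set R)
            ∪ C '' ((I ^ 2 : Ideal R) : Set R)) with hS
  set v1 : (R ⧸ I ^ 2) × (R ⧸ I) :=
    (Ideal.Quotient.mk (I ^ 2) ΘL, -Ideal.Quotient.mk I ΘH') with hv1
  set v2 : (R ⧸ I ^ 2) × (R ⧸ I) := (0, (p : R ⧸ I) ^ m) with hv2
  set N : Submodule R ((R ⧸ I ^ 2) × (R ⧸ I)) := Submodule.span R {v1, v2} with hN
  set L : R[X] →ₗ[R] (R ⧸ I ^ 2) × (R ⧸ I) :=
    LinearMap.prod ((I ^ 2 : Ideal R).mkQ ∘ₗ lcoeff R 0) ((I : Ideal R).mkQ ∘ₗ lcoeff R 1)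
    with hL
  have hLcoeff : ∀ f : R[X],
      L f = (Ideal.Quotient.mk (I ^ 2) (f.coeff 0), Ideal.Quotient.mk I (f.coeff 1)) := by
    intro f
    simp [hL, Submodule.mkQ_apply]
  have key : ∀ x ∈ Ideal.span S, ∀ a : R[X], L (a * x) ∈ N := by
    intro x hx
    refine Submodule.span_induction ?_ ?_ ?_ ?_ hx
    · rintro g ((hg | ⟨t, ht, rfl⟩) | ⟨s, hs, rfl⟩) a
      · -- the three "explicit" generators
        rcases hg with rfl | rfl | rfl
        · -- C ΘL - C ΘH' * X
          have : L (a * (C ΘL - C ΘH' * X)) = a.coeff 0 • v1 := by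
            rw [hLcoeff]
            have h0 : (a * (C ΘL - C ΘH' * X)).coeff 0 = a.coeff 0 * ΘL := by
              simp [mul_sub, ← mul_assoc, coeff_mul_C, mul_coeff_zero]
            have h1 : (a * (C ΘL - C ΘH' * X)).coeff 1 = a.coeff 1 * ΘL - a.coeff 0 * ΘH' := by
              simp [mul_sub, ← mul_assoc, coeff_mul_C, coeff_mul_X]
            rw [h0, h1, hv1, Prod.smul_mk]
            refine Prod.ext ?_ ?_
            · simp [Algebra.smul_def, Ideal.Quotient.algebraMap_eq, map_mul]
            · have : Ideal.Quotient.mk I (a.coeff 1 * ΘL) = 0 :=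
                Ideal.Quotient.eq_zero_iff_mem.2 (I.mul_mem_left _ hΘL)
              simp only [map_sub, this, zero_sub, Algebra.smul_def,
                Ideal.Quotient.algebraMap_eq, map_mul, mul_neg]
          rw [this]
          exact Submodule.smul_mem _ _ (Submodule.subset_span (by simp))
        · -- X ^ 2
          have : L (a * X ^ 2) = 0 := by
            rw [hLcoeff]
            have h0 : (a * X ^ 2).coeff 0 = 0 := by simp [mul_coeff_zero]
            have h1 : (a * X ^ 2).coeff 1 = 0 := by
              rw [pow_two, ← mul_assoc, coeff_mul_X, mul_coeff_zero]
              simp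
            simp [h0, h1]
          rw [this]; exact Submodule.zero_mem _
        · -- p ^ m * X
          have hpC : ((p : R[X]) ^ m * X) = C ((p : R) ^ m) * X := by
            simp [map_pow]
          have : L (a * ((p : R[X]) ^ m * X)) = a.coeff 0 • v2 := by
            rw [hLcoeff]
            have h0 : (a * ((p : R[X]) ^ m * X)).coeff 0 = 0 := by
              simp [mul_coeff_zero]
            have h1 : (a * ((p : R[X]) ^ m * X)).coeff 1 = a.coeff 0 * (p : R) ^ m := by
              rw [hpC, ← mul_assoc, coeff_mul_X, mul_coeff_zero, coeff_C]
              simp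
            rw [h0, h1, hv2, Prod.smul_mk]
            refine Prod.ext (by simp) ?_
            simp [Algebra.smul_def, Ideal.Quotient.algebraMap_eq, map_mul, map_pow]
          rw [this]
          exact Submodule.smul_mem _ _ (Submodule.subset_span (by simp))
      · -- X * C t, t ∈ I
        have : L (a * (X * C t)) = 0 := by
          rw [hLcoeff]
          have h0 : (a * (X * C t)).coeff 0 = 0 := by simp [mul_coeff_zero]
          have h1 : (a * (X * C t)).coeff 1 = a.coeff 0 * t := by
            rw [show a * (X * C t) = a * C t * X by ring, coeff_mul_X, coeff_mul_C]
          rw [h0, h1]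
          have : Ideal.Quotient.mk I (a.coeff 0 * t) = 0 :=
            Ideal.Quotient.eq_zero_iff_mem.2 (I.mul_mem_left _ ht)
          simp [this]
        rw [this]; exact Submodule.zero_mem _
      · -- C s, s ∈ I ^ 2
        have : L (a * C s) = 0 := by
          rw [hLcoeff]
          have h0 : (a * C s).coeff 0 = a.coeff 0 * s := coeff_mul_C _ _ _
          have h1 : (a * C s).coeff 1 = a.coeff 1 * s := coeff_mul_C _ _ _
          rw [h0, h1]
          have e0 : Ideal.Quotient.mk (I ^ 2) (a.coeff 0 * s) = 0 :=
            Ideal.Quotient.eq_zero_iff_mem.2 ((I ^ 2).mul_mem_left _ hs)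
          have e1 : Ideal.Quotient.mk I (a.coeff 1 * s) = 0 :=
            Ideal.Quotient.eq_zero_iff_mem.2 (I.mul_mem_left _
              ((Ideal.pow_le_self two_ne_zero) hs))
          simp [e0, e1]
        rw [this]; exact Submodule.zero_mem _
    · intro a; simp only [mul_zero, map_zero]; exact Submodule.zero_mem _
    · intro x y hx hy ihx ihy a
      rw [mul_add, map_add]
      exact Submodule.add_mem _ (ihx a) (ihy a)
    · intro b x hx ih a
      rw [smul_eq_mul, ← mul_assoc]
      exact ih (a * b)
  apply le_antisymm
  · intro r hr
    rw [RingHom.mem_ker, RingHom.comp_apply,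
      Ideal.Quotient.eq_zero_iff_mem] at hr
    have hCr : L (C r) ∈ N := by
      have := key _ hr 1
      rwa [one_mul] at this
    rw [hLcoeff] at hCr
    simp only [coeff_C_zero, coeff_C, one_ne_zero, if_false, if_true, map_zero] at hCr
    rw [hN, Submodule.mem_span_pair] at hCr
    obtain ⟨a, b, hab⟩ := hCr
    rw [hv1, hv2, Prod.smul_mk, Prod.smul_mk, Prod.mk_add_mk, Prod.mk.injEq] at hab
    obtain ⟨e1, e2⟩ := hab
    -- e1 : a • mk ΘL + b • 0 = mk r ; e2 : a • (-mk ΘH') + b • p^m = 0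
    obtain ⟨q, hq⟩ := hdvd
    obtain ⟨q', rfl⟩ := Ideal.Quotient.mk_surjective q
    -- from e2 deduce a ≡ p^(m-h) * q' * b mod I
    have e2' : Ideal.Quotient.mk I a * Ideal.Quotient.mk I ΘH'
        = Ideal.Quotient.mk I b * (p : R ⧸ I) ^ m := by
      have := e2
      rw [Algebra.smul_def, Algebra.smul_def, Ideal.Quotient.algebraMap_eq] at this
      rw [mul_neg] at this
      linear_combination -this
    have hmsplit : (p : R ⧸ I) ^ m
        = Ideal.Quotient.mk I ΘH' * (Ideal.Quotient.mk I q' * (p : R ⧸ I) ^ (m - h)) := by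
      have hpm : (p : R ⧸ I) ^ m = (p : R ⧸ I) ^ h * (p : R ⧸ I) ^ (m - h) := by
        rw [← pow_add]; congr 1; omega
      rw [hpm, hq]; ring
    have hcancel : Ideal.Quotient.mk I a
        = Ideal.Quotient.mk I b * (Ideal.Quotient.mk I q' * (p : R ⧸ I) ^ (m - h)) := by
      have := e2'
      rw [hmsplit] at this
      have h3 : (Ideal.Quotient.mk I a) * Ideal.Quotient.mk I ΘH'
          = (Ideal.Quotient.mk I b * (Ideal.Quotient.mk I q' * (p : R ⧸ I) ^ (m - h)))
              * Ideal.Quotient.mk I ΘH' := by linear_combination this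
      exact (mul_cancel_right_mem_nonZeroDivisors hnzd).1 h3
    -- so a - b * q' * p^(m-h) ∈ I
    have hmem : a - b * (q' * (p : R) ^ (m - h)) ∈ I := by
      rw [← Ideal.Quotient.eq_zero_iff_mem, map_sub, sub_eq_zero, hcancel]
      simp only [map_mul, map_pow, map_natCast]
    have haΘL : a * ΘL ∈ I ^ 2 := by
      have hsplit : a * ΘL
          = (a - b * (q' * (p : R) ^ (m - h))) * ΘL
            + (p : R) ^ c * ((p : R) ^ (m - h - c) * (b * q' * ΘL)) := by
        have hpmh : (p : R) ^ (m - h) = (p : R) ^ c * (p : R) ^ (m - h - c) := by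
          rw [← pow_add]; congr 1; omega
        rw [hpmh]; ring
      rw [hsplit]
      refine Ideal.add_mem _ ?_ ?_
      · have := Ideal.mul_mem_mul hmem hΘL
        rwa [← pow_two] at this
      · exact hc _ (I.mul_mem_left _ (I.mul_mem_left _ hΘL))
    have : Ideal.Quotient.mk (I ^ 2) r = 0 := by
      rw [← e1]
      have : (b : R) • (0 : R ⧸ I ^ 2) = 0 := smul_zero b
      rw [this, add_zero, Algebra.smul_def, Ideal.Quotient.algebraMap_eq, ← map_mul,
        Ideal.Quotient.eq_zero_iff_mem]
      exact haΘL
    exact Ideal.Quotient.eq_zero_iff_mem.1 this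
  · intro r hr
    rw [RingHom.mem_ker, RingHom.comp_apply,
      Ideal.Quotient.eq_zero_iff_mem]
    exact Ideal.subset_span (Or.inr ⟨r, hr, rfl⟩)
end

section
/- Let Λ = A ⊕ Ā where Ā = A/I_A for an ideal I_A of a commutative ring A, with λ = (0,1), and let J₀ = (I_A²·Λ, Θ_L − Θ_H·λ, p^m·Λ) where Θ_L ∈ I_A and Θ_H ∈ Ā. If a + λb ∈ J₀ with a, b ∈ A (b taken mod I_A), then in the ring A_L^# = A[𝓛]/(𝓛Θ_H^lift − Θ_L, 𝓛I_A, 𝓛², I_A²) we have a + b𝓛 ∈ (p^m). -/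
open Polynomial

section Aux
variable {A : Type*} [CommRing A] (I_A : Ideal A) (ΘL ΘH : A)

noncomputable def auxIdeal : Ideal (Polynomial A) :=
  Ideal.span ({X * C ΘH - C ΘL, X ^ 2} ∪ (fun t : A => X * C t) '' (I_A : Set A)
    ∪ C '' ((I_A ^ 2 : Ideal A) : Set A))

noncomputable def auxMk : Polynomial A →+* (Polynomial A ⧸ auxIdeal I_A ΘL ΘH) :=
  Ideal.Quotient.mk _

lemma auxMk_smul (r : A) (x : Polynomial A) :
    r • (auxMk I_A ΘL ΘH x) = auxMk I_A ΘL ΘH (C r * x) := by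
  show r • Submodule.Quotient.mk x = Submodule.Quotient.mk (C r * x)
  rw [← Submodule.Quotient.mk_smul, Polynomial.smul_eq_C_mul]

lemma auxMk_XC (i : A) (hi : i ∈ I_A) : auxMk I_A ΘL ΘH (X * C i) = 0 := by
  rw [auxMk, Ideal.Quotient.eq_zero_iff_mem, auxIdeal]
  exact Ideal.subset_span (by left; right; exact ⟨i, hi, rfl⟩)

lemma auxMk_Csq (i : A) (hi : i ∈ I_A ^ 2) : auxMk I_A ΘL ΘH (C i) = 0 := by
  rw [auxMk, Ideal.Quotient.eq_zero_iff_mem, auxIdeal]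
  exact Ideal.subset_span (by right; exact ⟨i, hi, rfl⟩)

lemma auxMk_rel : auxMk I_A ΘL ΘH (X * C ΘH - C ΘL) = 0 := by
  rw [auxMk, Ideal.Quotient.eq_zero_iff_mem, auxIdeal]
  exact Ideal.subset_span (by left; left; left; rfl)

noncomputable def auxG0 : A →ₗ[A] (Polynomial A ⧸ auxIdeal I_A ΘL ΘH) where
  toFun b := auxMk I_A ΘL ΘH (X * C b)
  map_add' x y := by simp only [C_add, mul_add, map_add]
  map_smul' r x := by
    simp only [RingHom.id_apply, auxMk_smul, smul_eq_mul, C_mul]; ring_nf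

noncomputable def auxG : (A ⧸ I_A) →ₗ[A] (Polynomial A ⧸ auxIdeal I_A ΘL ΘH) :=
  Submodule.liftQ I_A (auxG0 I_A ΘL ΘH) (by
    intro i hi
    simp only [LinearMap.mem_ker, auxG0, LinearMap.coe_mk, AddHom.coe_mk]
    exact auxMk_XC I_A ΘL ΘH i hi)

lemma auxG_mk (b : A) :
    auxG I_A ΘL ΘH (Ideal.Quotient.mk I_A b) = auxMk I_A ΘL ΘH (X * C b) := rfl

noncomputable def auxF : (A × (A ⧸ I_A)) →ₗ[A] (Polynomial A ⧸ auxIdeal I_A ΘL ΘH) where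
  toFun v := auxMk I_A ΘL ΘH (C v.1) + auxG I_A ΘL ΘH v.2
  map_add' x y := by simp [C_add, map_add]; ring
  map_smul' r v := by
    simp only [RingHom.id_apply, Prod.smul_fst, Prod.smul_snd, smul_eq_mul, C_mul,
      map_mul, map_smul, smul_add, auxMk_smul]

end Aux

/-- Let `A` be a commutative ring with ideal `I_A`, `Λ = A ⊕ A/I_A`, `ΘL ∈ I_A`,
`ΘH ∈ A` a lift of `Θ_H ∈ A/I_A`, and
`J₀ = (I_A²·Λ, (ΘL, −ΘH), p^m·Λ) ⊆ Λ`.  If `(a, b mod I_A) ∈ J₀`, then in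
`A_L^# = A[𝓛]/(𝓛·ΘH − ΘL, 𝓛·I_A, 𝓛², I_A²)` the element `a + b·𝓛` lies in the
ideal `(p^m)`. -/
theorem stmt_18 {A : Type*} [CommRing A] (I_A : Ideal A) (ΘL ΘH : A)
    (hΘL : ΘL ∈ I_A) (p m : ℕ) (hp : p.Prime) (a b : A)
    (h : (a, Ideal.Quotient.mk I_A b) ∈
      ((I_A ^ 2) • (⊤ : Submodule A (A × (A ⧸ I_A)))
        ⊔ Submodule.span A {((ΘL, -(Ideal.Quotient.mk I_A ΘH)) : A × (A ⧸ I_A))}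
        ⊔ (Ideal.span {(p : A) ^ m}) • (⊤ : Submodule A (A × (A ⧸ I_A))))) :
    Ideal.Quotient.mk (Ideal.span
        ({X * C ΘH - C ΘL, X ^ 2} ∪ (fun t : A => X * C t) '' (I_A : Set A)
          ∪ C '' ((I_A ^ 2 : Ideal A) : Set A))) (C a + C b * X) ∈
      Ideal.span {Ideal.Quotient.mk (Ideal.span
        ({X * C ΘH - C ΘL, X ^ 2} ∪ (fun t : A => X * C t) '' (I_A : Set A)
          ∪ C '' ((I_A ^ 2 : Ideal A) : Set A))) (C ((p : A) ^ m))} := by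
  show auxMk I_A ΘL ΘH (C a + C b * X) ∈
    Ideal.span {auxMk I_A ΘL ΘH (C ((p : A) ^ m))}
  have hF : auxF I_A ΘL ΘH (a, Ideal.Quotient.mk I_A b)
      = auxMk I_A ΘL ΘH (C a + C b * X) := by
    show auxMk I_A ΘL ΘH (C a) + auxG I_A ΘL ΘH (Ideal.Quotient.mk I_A b) = _
    rw [auxG_mk, ← map_add]
    ring_nf
  rw [← hF]
  have key : ((I_A ^ 2) • (⊤ : Submodule A (A × (A ⧸ I_A)))
        ⊔ Submodule.span A {((ΘL, -(Ideal.Quotient.mk I_A ΘH)) : A × (A ⧸ I_A))}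
        ⊔ (Ideal.span {(p : A) ^ m}) • (⊤ : Submodule A (A × (A ⧸ I_A)))) ≤
      Submodule.comap (auxF I_A ΘL ΘH)
        (Submodule.restrictScalars A
          (Ideal.span {auxMk I_A ΘL ΘH (C ((p : A) ^ m))})) := by
    refine sup_le (sup_le ?_ ?_) ?_
    · refine Submodule.smul_le.2 fun r hr v _ => ?_
      obtain ⟨x, hx⟩ := Ideal.Quotient.mk_surjective (I := auxIdeal I_A ΘL ΘH)
        (auxF I_A ΘL ΘH v)
      simp only [Submodule.mem_comap, map_smul, Submodule.restrictScalars_mem]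
      rw [show auxF I_A ΘL ΘH v = auxMk I_A ΘL ΘH x from hx.symm, auxMk_smul,
        map_mul, auxMk_Csq I_A ΘL ΘH r hr, zero_mul]
      exact zero_mem _
    · rw [Submodule.span_le, Set.singleton_subset_iff]
      simp only [SetLike.mem_coe, Submodule.mem_comap, Submodule.restrictScalars_mem]
      have : auxF I_A ΘL ΘH (ΘL, -(Ideal.Quotient.mk I_A ΘH)) = 0 := by
        show auxMk I_A ΘL ΘH (C ΘL) + auxG I_A ΘL ΘH (-(Ideal.Quotient.mk I_A ΘH)) = 0
        rw [map_neg, auxG_mk, ← sub_eq_add_neg, ← map_sub,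
          show C ΘL - X * C ΘH = -(X * C ΘH - C ΘL) by ring, map_neg,
          auxMk_rel, neg_zero]
      rw [this]; exact zero_mem _
    · refine Submodule.smul_le.2 fun r hr v _ => ?_
      obtain ⟨x, hx⟩ := Ideal.Quotient.mk_surjective (I := auxIdeal I_A ΘL ΘH)
        (auxF I_A ΘL ΘH v)
      obtain ⟨c, rfl⟩ := Ideal.mem_span_singleton'.1 hr
      simp only [Submodule.mem_comap, map_smul, Submodule.restrictScalars_mem]
      rw [show auxF I_A ΘL ΘH v = auxMk I_A ΘL ΘH x from hx.symm, auxMk_smul]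
      refine Ideal.mem_span_singleton.2 ⟨auxMk I_A ΘL ΘH (C c * x), ?_⟩
      exact congrArg _ (by rw [C_mul]; ring)
  exact key h
end
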